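/- Let q be a prime power, ℓ | q−1, s = (q−1)/ℓ, and suppose f(x) = x^r h(x^s) permutes F_q, where g(x) = x^r h(x)^s permutes μ_ℓ with inverse g⁻¹ on μ_ℓ. If a, b are integers with a·s + b·r = 1, then the compositional inverse of f on F_q is given by f⁻¹(x) = g⁻¹(x^s)^a · x^b · h(g⁻¹(x^s))^{−b} for x ≠ 0, and f⁻¹(0) = 0. -/

import Mathlib

open scoped Classical

/-- Proposition 3.1: if `f(x) = x^r h(x^s)` permutes `F_q`, `g(x) = x^r h(x)^s`
permutes `μ_ℓ` with inverse `ginv`, and `a·s + b·r = 1`, then the compositional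
inverse of `f` is `x ↦ g⁻¹(x^s)^a · x^b · h(g⁻¹(x^s))^{-b}` on `F_q^*`, and `0 ↦ 0`. -/
theorem inverse_of_xr_hxs (K : Type) [Field K] [Fintype K]
    (ℓ r : ℕ) (hℓ : 0 < ℓ) (hr : 0 < r) (hdvd : ℓ ∣ Fintype.card K - 1)
    (s : ℕ) (hs : s = (Fintype.card K - 1) / ℓ)
    (h : Polynomial K)
    (f g : K → K)
    (hf : ∀ x : K, f x = x ^ r * h.eval (x ^ s))
    (hg : ∀ x : K, g x = x ^ r * (h.eval x) ^ s)
    (hfbij : Function.Bijective f)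
    (hgbij : Set.BijOn g {x : K | x ^ ℓ = 1} {x : K | x ^ ℓ = 1})
    (ginv : K → K)
    (hginv_maps : Set.MapsTo ginv {x : K | x ^ ℓ = 1} {x : K | x ^ ℓ = 1})
    (hginv₁ : ∀ x ∈ ({x : K | x ^ ℓ = 1} : Set K), ginv (g x) = x)
    (hginv₂ : ∀ x ∈ ({x : K | x ^ ℓ = 1} : Set K), g (ginv x) = x)
    (a b : ℤ) (hab : a * (s : ℤ) + b * (r : ℤ) = 1)
    (finv : K → K)
    (hfinv : ∀ x : K, finv x =
      if x = 0 then 0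
      else ginv (x ^ s) ^ a * x ^ b * (h.eval (ginv (x ^ s))) ^ (-b)) :
    Function.LeftInverse finv f ∧ Function.RightInverse finv f := by
  have hsl : s * ℓ = Fintype.card K - 1 := by
    rw [hs]; exact Nat.div_mul_cancel hdvd
  have hf0 : f 0 = 0 := by rw [hf]; simp [zero_pow hr.ne']
  have key : Function.LeftInverse finv f := by
    intro x
    by_cases hx : x = 0
    · subst hx; rw [hf0, hfinv]; simp
    have hxs : x ^ s ∈ ({y : K | y ^ ℓ = 1} : Set K) := by
      show (x ^ s) ^ ℓ = 1
      rw [← pow_mul, hsl]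
      exact FiniteField.pow_card_sub_one_eq_one x hx
    have hfx : f x ≠ 0 := fun hc => hx (hfbij.1 (hc.trans hf0.symm))
    have hh : h.eval (x ^ s) ≠ 0 := by
      intro hc; apply hfx; rw [hf, hc, mul_zero]
    have hfxs : (f x) ^ s = g (x ^ s) := by
      rw [hf, hg, mul_pow, ← pow_mul, mul_comm r s, pow_mul]
    have hginvfx : ginv ((f x) ^ s) = x ^ s := by
      rw [hfxs, hginv₁ _ hxs]
    rw [hfinv, if_neg hfx, hginvfx, hf]
    rw [mul_zpow, zpow_neg, ← zpow_natCast x s, ← zpow_natCast x r,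
      ← zpow_mul, ← zpow_mul]
    field_simp
    rw [
      ← zpow_add₀ hx, mul_comm (s:ℤ) a, mul_comm (r:ℤ) b, hab, zpow_one]
  refine ⟨key, fun y => ?_⟩
  obtain ⟨x, rfl⟩ := hfbij.2 y
  rw [key]
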